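/- For every polynomial f ∈ 𝕋[x_1,…,x_n], f is equivalent to its essential part: f(a) = f^e(a) for all a ∈ 𝕋^n. -/

import Mathlib

/-- The extended tropical semiring `𝕋`: tangible reals `(a, false)`,
ghost reals `(a, true)`, and `none` = `-∞`. -/
def T : Type := Option (ℝ × Bool)

namespace T

/-- The tangible element of value `a`. -/
def tang (a : ℝ) : T := some (a, false)

/-- The ghost element `a^ν` of value `a`. -/
def ghost (a : ℝ) : T := some (a, true)

/-- Tropical addition on `𝕋`. -/
noncomputable def add : T → T → T
  | none, y => y
  | some p, none => some p
  | some (a, s), some (b, t) =>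
      if a < b then some (b, t) else if b < a then some (a, s) else some (a, true)

/-- Tropical multiplication on `𝕋`. -/
noncomputable def mul : T → T → T
  | none, _ => none
  | some _, none => none
  | some (a, s), some (b, t) => some (a + b, s || t)

lemma add_assoc' : ∀ x y z : T, add (add x y) z = add x (add y z) := by
  rintro (_ | ⟨a, s⟩) (_ | ⟨b, t⟩) (_ | ⟨c, u⟩) <;>
    (try simp only [add]) <;> (try delta T at *) <;>
    (try split_ifs) <;>
    (try simp only [add]) <;> (try delta T at *) <;>
    (try split_ifs) <;>
    first
      | rfl
      | (exfalso; linarith)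
      | (refine congrArg some ?_; refine Prod.ext ?_ ?_ <;>
          first | rfl | linarith | simp)

lemma add_comm' : ∀ x y : T, add x y = add y x := by
  rintro (_ | ⟨a, s⟩) (_ | ⟨b, t⟩) <;>
    (try simp only [add]) <;> (try delta T at *) <;>
    (try split_ifs) <;>
    first
      | rfl
      | (exfalso; linarith)
      | (refine congrArg some ?_; refine Prod.ext ?_ ?_ <;>
          first | rfl | linarith | simp)

lemma mul_assoc' : ∀ x y z : T, mul (mul x y) z = mul x (mul y z) := by
  rintro (_ | ⟨a, s⟩) (_ | ⟨b, t⟩) (_ | ⟨c, u⟩) <;>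
    simp [mul, add_assoc, Bool.or_assoc] <;> rfl

lemma mul_comm' : ∀ x y : T, mul x y = mul y x := by
  rintro (_ | ⟨a, s⟩) (_ | ⟨b, t⟩) <;> simp [mul, add_comm, Bool.or_comm] <;> rfl

lemma left_distrib' : ∀ x y z : T, mul x (add y z) = add (mul x y) (mul x z) := by
  rintro (_ | ⟨a, s⟩) (_ | ⟨b, t⟩) (_ | ⟨c, u⟩) <;>
    (try simp only [add, mul]) <;> (try delta T at *) <;>
    (try split_ifs) <;>
    (try simp only [add, mul]) <;> (try delta T at *) <;>
    (try split_ifs) <;>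
    first
      | rfl
      | (exfalso; linarith)
      | (refine congrArg some ?_; refine Prod.ext ?_ ?_ <;>
          first | rfl | linarith | simp)

noncomputable instance : Zero T := ⟨none⟩
noncomputable instance : One T := ⟨some (0, false)⟩
noncomputable instance : Add T := ⟨add⟩
noncomputable instance : Mul T := ⟨mul⟩

noncomputable instance : CommSemiring T where
  add := (· + ·)
  zero := 0
  add_assoc := add_assoc'
  zero_add := fun x => by cases x <;> rfl
  add_zero := fun x => by cases x <;> rfl
  add_comm := add_comm'
  mul := (· * ·)
  one := 1
  mul_assoc := mul_assoc'
  one_mul := fun x => by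
    show mul (some (0, false)) x = x
    rcases x with _ | ⟨a, s⟩ <;> simp [mul] <;> rfl
  mul_one := fun x => by
    show mul x (some (0, false)) = x
    rcases x with _ | ⟨a, s⟩ <;> simp [mul] <;> rfl
  mul_comm := mul_comm'
  zero_mul := fun x => by cases x <;> rfl
  mul_zero := fun x => by cases x <;> rfl
  left_distrib := left_distrib'
  right_distrib := fun x y z => by
    show mul (add x y) z = add (mul x z) (mul y z)
    rw [mul_comm', left_distrib', mul_comm' z x, mul_comm' z y]
  nsmul := nsmulRec

/-- Membership in the ghost part `𝕌̄ = 𝕌 ∪ {-∞}` of `𝕋`. -/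
def isGhost : T → Prop
  | none => True
  | some (_, s) => s = true

/-- Membership in the tangible part `ℝ ∪ {-∞}` of `𝕋`. -/
def isTangible : T → Prop
  | none => True
  | some (_, s) => s = false

/-- The underlying real value (junk value `0` at `-∞`); this is `π` on elements `≠ -∞`. -/
def val : T → ℝ
  | none => 0
  | some (a, _) => a

/-- The ghost map `ν`. -/
def nu : T → T
  | none => none
  | some (a, _) => some (a, true)

end T

namespace T

/-- The model value in the half line `[0,∞)`: `-∞ ↦ 0`, an element of value `a ↦ exp a`. -/
noncomputable def gval : T → ℝ
  | none => 0
  | some (a, _) => Real.exp a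

lemma nu_isGhost : ∀ x : T, isGhost (nu x)
  | none => trivial
  | some (_, _) => rfl

lemma gval_injOn_tang : Set.InjOn gval {x : T | isTangible x} := by
  rintro (_ | ⟨a, s⟩) hx (_ | ⟨b, t⟩) hy h <;>
    simp only [gval, Set.mem_setOf_eq, isTangible] at hx hy h
  · rfl
  · exact absurd h.symm (Real.exp_pos b).ne'
  · exact absurd h (Real.exp_pos a).ne'
  · rw [Real.exp_eq_exp] at h; subst hx; subst hy; subst h; rfl

lemma gval_injOn_ghost : Set.InjOn gval {x : T | isGhost x} := by
  rintro (_ | ⟨a, s⟩) hx (_ | ⟨b, t⟩) hy h <;>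
    simp only [gval, Set.mem_setOf_eq, isGhost] at hx hy h
  · rfl
  · exact absurd h.symm (Real.exp_pos b).ne'
  · exact absurd h (Real.exp_pos a).ne'
  · rw [Real.exp_eq_exp] at h; subst hx; subst hy; subst h; rfl

lemma gval_image_tang : gval '' {x : T | isTangible x} = Set.Ici 0 := by
  ext y
  constructor
  · rintro ⟨(_ | ⟨a, s⟩), hx, rfl⟩
    · exact Set.self_mem_Ici
    · exact le_of_lt (by simpa [gval] using Real.exp_pos a)
  · intro hy
    rcases eq_or_lt_of_le (Set.mem_Ici.mp hy : (0 : ℝ) ≤ y) with h | h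
    · exact ⟨none, trivial, h⟩
    · exact ⟨some (Real.log y, false), rfl, by simp [gval, Real.exp_log h]⟩

lemma gval_image_ghost : gval '' {x : T | isGhost x} = Set.Ici 0 := by
  ext y
  constructor
  · rintro ⟨(_ | ⟨a, s⟩), hx, rfl⟩
    · exact Set.self_mem_Ici
    · exact le_of_lt (by simpa [gval] using Real.exp_pos a)
  · intro hy
    rcases eq_or_lt_of_le (Set.mem_Ici.mp hy : (0 : ℝ) ≤ y) with h | h
    · exact ⟨none, trivial, h⟩
    · exact ⟨some (Real.log y, true), rfl, by simp [gval, Real.exp_log h]⟩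

/-- The closed sets of the topology on `𝕋`: both the tangible and the ghost layers are
closed in the model `[0,∞)` of `𝕌̄`, and the ghost image of the tangible layer is
contained in the set. -/
def TIsClosed (W : Set T) : Prop :=
  IsClosed (gval '' (W ∩ {x | isTangible x})) ∧
  IsClosed (gval '' (W ∩ {x | isGhost x})) ∧
  nu '' (W ∩ {x | isTangible x}) ⊆ W ∩ {x | isGhost x}

/-- The topology on `𝕋`. -/
noncomputable instance : TopologicalSpace T :=
  TopologicalSpace.ofClosed {W | TIsClosed W}
    (by
      refine ⟨?_, ?_, ?_⟩ <;> simp [TIsClosed])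
    (fun A hA => by
      rcases A.eq_empty_or_nonempty with rfl | hne
      · rw [Set.sInter_empty]
        refine ⟨?_, ?_, ?_⟩
        · rw [Set.univ_inter, gval_image_tang]; exact isClosed_Ici
        · rw [Set.univ_inter, gval_image_ghost]; exact isClosed_Ici
        · rintro y ⟨x, ⟨-, _⟩, rfl⟩
          exact ⟨trivial, nu_isGhost x⟩
      · have : Nonempty A := hne.to_subtype
        have h1 : (⋂₀ A) ∩ {x : T | isTangible x}
            = ⋂ (W : A), ((W : Set T) ∩ {x | isTangible x}) := by
          ext x
          simp only [Set.mem_inter_iff, Set.mem_sInter, Set.mem_iInter, Set.mem_setOf_eq]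
          constructor
          · rintro ⟨h, ht⟩ W; exact ⟨h W W.2, ht⟩
          · intro h
            obtain ⟨W, hW⟩ := hne
            exact ⟨fun V hV => (h ⟨V, hV⟩).1, (h ⟨W, hW⟩).2⟩
        have h2 : (⋂₀ A) ∩ {x : T | isGhost x}
            = ⋂ (W : A), ((W : Set T) ∩ {x | isGhost x}) := by
          ext x
          simp only [Set.mem_inter_iff, Set.mem_sInter, Set.mem_iInter, Set.mem_setOf_eq]
          constructor
          · rintro ⟨h, ht⟩ W; exact ⟨h W W.2, ht⟩
          · intro h
            obtain ⟨W, hW⟩ := hne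
            exact ⟨fun V hV => (h ⟨V, hV⟩).1, (h ⟨W, hW⟩).2⟩
        refine ⟨?_, ?_, ?_⟩
        · rw [h1, Set.InjOn.image_iInter_eq
            (gval_injOn_tang.mono (Set.iUnion_subset fun W => Set.inter_subset_right))]
          exact isClosed_iInter fun W => (hA W.2).1
        · rw [h2, Set.InjOn.image_iInter_eq
            (gval_injOn_ghost.mono (Set.iUnion_subset fun W => Set.inter_subset_right))]
          exact isClosed_iInter fun W => (hA W.2).2.1
        · rintro y ⟨x, ⟨hx, hxt⟩, rfl⟩
          refine ⟨fun W hW => ((hA hW).2.2 ⟨x, ⟨hx W hW, hxt⟩, rfl⟩).1, nu_isGhost x⟩)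
    (fun A hA B hB => by
      have h1 : (A ∪ B) ∩ {x : T | isTangible x}
          = (A ∩ {x | isTangible x}) ∪ (B ∩ {x | isTangible x}) :=
        Set.union_inter_distrib_right A B _
      have h2 : (A ∪ B) ∩ {x : T | isGhost x}
          = (A ∩ {x | isGhost x}) ∪ (B ∩ {x | isGhost x}) :=
        Set.union_inter_distrib_right A B _
      refine ⟨?_, ?_, ?_⟩
      · rw [h1, Set.image_union]; exact hA.1.union hB.1
      · rw [h2, Set.image_union]; exact hA.2.1.union hB.2.1
      · rintro y ⟨x, ⟨hx, hxt⟩, rfl⟩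
        rcases hx with hxA | hxB
        · have h := hA.2.2 ⟨x, ⟨hxA, hxt⟩, rfl⟩
          exact ⟨Or.inl h.1, h.2⟩
        · have h := hB.2.2 ⟨x, ⟨hxB, hxt⟩, rfl⟩
          exact ⟨Or.inr h.1, h.2⟩)

end T

namespace T

/-- `f` dominates `g` if `f ⊕ g` and `f` agree as functions. -/
def Dominates {n : ℕ} (f g : MvPolynomial (Fin n) T) : Prop :=
  ∀ a : Fin n → T, MvPolynomial.eval a f + MvPolynomial.eval a g = MvPolynomial.eval a f

/-- The polynomial obtained from `f` by deleting the monomial with exponent `i`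
(setting its coefficient to `-∞`). -/
noncomputable def removeMono {n : ℕ} (i : Fin n →₀ ℕ) (f : MvPolynomial (Fin n) T) :
    MvPolynomial (Fin n) T :=
  ∑ j ∈ f.support.erase i, MvPolynomial.monomial j (MvPolynomial.coeff j f)

/-- The monomial of `f` with exponent `i` is essential. -/
def Essential {n : ℕ} (f : MvPolynomial (Fin n) T) (i : Fin n →₀ ℕ) : Prop :=
  i ∈ f.support ∧
    ¬ Dominates (removeMono i f) (MvPolynomial.monomial i (MvPolynomial.coeff i f))

open Classical in
/-- The essential part `f^e` of `f`: the sum of the essential monomials of `f`. -/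
noncomputable def essentialPart {n : ℕ} (f : MvPolynomial (Fin n) T) :
    MvPolynomial (Fin n) T :=
  ∑ i ∈ f.support,
    if Essential f i then MvPolynomial.monomial i (MvPolynomial.coeff i f) else 0

end T

namespace TropAux

open T

lemma zero_def : (0 : T) = none := rfl

lemma add_def (x y : T) : x + y = T.add x y := rfl
lemma mul_def (x y : T) : x * y = T.mul x y := rfl

lemma gval_zero : gval (0 : T) = 0 := rfl

lemma gval_nonneg (x : T) : 0 ≤ gval x := by
  rcases x with _ | ⟨a, s⟩
  · exact le_refl 0
  · exact (Real.exp_pos a).le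

lemma gval_pos {x : T} (hx : x ≠ 0) : 0 < gval x := by
  rcases x with _ | ⟨a, s⟩
  · exact absurd rfl hx
  · exact Real.exp_pos a

lemma eq_zero_of_gval_eq_zero {x : T} (hx : gval x = 0) : x = 0 := by
  rcases x with _ | ⟨a, s⟩
  · rfl
  · exact absurd hx (Real.exp_pos a).ne'

lemma gval_add (x y : T) : gval (x + y) = max (gval x) (gval y) := by
  rcases x with _ | ⟨a, s⟩ <;> rcases y with _ | ⟨b, t⟩
  · show gval (T.add _ _) = _
    simp [T.add, gval]
  · show gval (T.add _ _) = _
    simp [T.add, gval, (Real.exp_pos b).le]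
  · show gval (T.add _ _) = _
    simp [T.add, gval, (Real.exp_pos a).le]
  · show gval (T.add (some (a, s)) (some (b, t))) = max (Real.exp a) (Real.exp b)
    by_cases h1 : a < b
    · rw [show T.add (some (a, s)) (some (b, t)) = some (b, t) from if_pos h1]
      simp [gval, max_eq_right (Real.exp_le_exp.2 h1.le)]
    · by_cases h2 : b < a
      · rw [show T.add (some (a, s)) (some (b, t)) = some (a, s) from
          (if_neg h1).trans (if_pos h2)]
        simp [gval, max_eq_left (Real.exp_le_exp.2 h2.le)]
      · have : a = b := le_antisymm (not_lt.1 h2) (not_lt.1 h1)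
        subst this
        rw [show T.add (some (a, s)) (some (a, t)) = some (a, true) from
          (if_neg h1).trans (if_neg h2)]
        simp [gval]

lemma gval_mul (x y : T) : gval (x * y) = gval x * gval y := by
  rcases x with _ | ⟨a, s⟩ <;> rcases y with _ | ⟨b, t⟩ <;>
    (show gval (T.mul _ _) = _) <;> simp [T.mul, gval, Real.exp_add]

lemma add_eq_left {x y : T} (h : gval y < gval x) : x + y = x := by
  rcases x with _ | ⟨a, s⟩ <;> rcases y with _ | ⟨b, t⟩
  · exact absurd h (lt_irrefl 0)
  · exact absurd h (not_lt.2 (gval_nonneg _))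
  · rfl
  · show T.add _ _ = _
    simp only [gval] at h
    have hba : b < a := by
      by_contra hc
      exact absurd (Real.exp_le_exp.2 (not_lt.1 hc)) (not_le.2 h)
    simp only [T.add]
    exact (if_neg (not_lt.2 hba.le)).trans (if_pos hba)

lemma add_eq_ghost {x y : T} (hx : x ≠ 0) (h : gval x = gval y) : x + y = nu x := by
  rcases x with _ | ⟨a, s⟩
  · exact absurd rfl hx
  rcases y with _ | ⟨b, t⟩
  · exact absurd h.symm (Real.exp_pos a).ne
  · show T.add _ _ = _
    simp only [gval] at h
    have hab : a = b := Real.exp_injective h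
    subst hab
    simp only [T.add, lt_irrefl, if_false, if_neg (lt_irrefl a)]
    rfl

lemma nu_eq_ghost_log {x : T} {V : ℝ} (hV : 0 < V) (h : gval x = V) :
    nu x = some (Real.log V, true) := by
  rcases x with _ | ⟨a, s⟩
  · simp only [gval] at h; exact absurd h hV.ne
  · simp only [gval] at h
    simp only [nu]
    rw [← h, Real.log_exp]

end TropAux
namespace TropAux

open T

variable {ι : Type*} [DecidableEq ι]

lemma gval_sum_le {s : Finset ι} {g : ι → T} {V : ℝ} (hV : 0 ≤ V)
    (h : ∀ j ∈ s, gval (g j) ≤ V) : gval (∑ j ∈ s, g j) ≤ V := by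
  classical
  induction s using Finset.cons_induction with
  | empty => simpa [gval_zero] using hV
  | cons j s hj ih =>
    rw [Finset.sum_cons, gval_add]
    exact max_le (h j (Finset.mem_cons_self j s))
      (ih fun i hi => h i (Finset.mem_cons_of_mem hi))

lemma gval_sum_lt {s : Finset ι} {g : ι → T} {V : ℝ} (hV : 0 < V)
    (h : ∀ j ∈ s, gval (g j) < V) : gval (∑ j ∈ s, g j) < V := by
  classical
  induction s using Finset.cons_induction with
  | empty => simpa [gval_zero] using hV
  | cons j s hj ih =>
    rw [Finset.sum_cons, gval_add]
    exact max_lt (h j (Finset.mem_cons_self j s))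
      (ih fun i hi => h i (Finset.mem_cons_of_mem hi))

lemma le_gval_sum {s : Finset ι} {g : ι → T} {j : ι} (hj : j ∈ s) :
    gval (g j) ≤ gval (∑ i ∈ s, g i) := by
  rw [← Finset.add_sum_erase s g hj, gval_add]
  exact le_max_left _ _

lemma sum_subset_eq {s t : Finset ι} {g : ι → T} (hts : t ⊆ s)
    (h : ∀ j ∈ s, j ∉ t → gval (g j) < gval (∑ k ∈ t, g k)) :
    ∑ j ∈ s, g j = ∑ j ∈ t, g j := by
  rw [← Finset.sum_sdiff hts]
  rcases (s \ t).eq_empty_or_nonempty with he | ⟨j1, hj1⟩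
  · rw [he, Finset.sum_empty, zero_add]
  · have hj1' := Finset.mem_sdiff.1 hj1
    have hW : 0 < gval (∑ k ∈ t, g k) :=
      lt_of_le_of_lt (gval_nonneg _) (h j1 hj1'.1 hj1'.2)
    have : gval (∑ j ∈ s \ t, g j) < gval (∑ k ∈ t, g k) := by
      refine gval_sum_lt hW fun j hj => ?_
      have hj' := Finset.mem_sdiff.1 hj
      exact h j hj'.1 hj'.2
    rw [add_comm, add_eq_left this]

lemma sum_ghost {s : Finset ι} {g : ι → T} {V : ℝ} (hV : 0 < V)
    (h : ∀ j ∈ s, gval (g j) = V) {j0 j1 : ι} (hj0 : j0 ∈ s) (hj1 : j1 ∈ s)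
    (hne : j0 ≠ j1) : ∑ j ∈ s, g j = some (Real.log V, true) := by
  rw [← Finset.add_sum_erase s g hj0]
  have hj1' : j1 ∈ s.erase j0 := Finset.mem_erase.2 ⟨fun hc => hne hc.symm, hj1⟩
  have hgj0 : gval (g j0) = V := h j0 hj0
  have hx : g j0 ≠ 0 := fun hc => by
    rw [hc, gval_zero] at hgj0; exact hV.ne hgj0
  have hrest : gval (∑ j ∈ s.erase j0, g j) = V := by
    refine le_antisymm (gval_sum_le hV.le fun j hj => (h j (Finset.mem_of_mem_erase hj)).le) ?_
    calc V = gval (g j1) := (h j1 hj1).symm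
    _ ≤ _ := le_gval_sum hj1'
  rw [add_eq_ghost hx (by rw [hgj0, hrest])]
  exact nu_eq_ghost_log hV hgj0

end TropAux
namespace TropAux

open T MvPolynomial

lemma tang_mul (a b : ℝ) : tang a * tang b = tang (a + b) := rfl

lemma tang_zero : tang 0 = (1 : T) := rfl

lemma tang_pow (m : ℕ) (x : ℝ) : tang x ^ m = tang (m * x) := by
  induction m with
  | zero => simp [tang_zero]
  | succ k ih =>
    rw [pow_succ, ih, tang_mul]
    congr 1
    push_cast
    ring

lemma gval_tang (x : ℝ) : gval (tang x) = Real.exp x := rfl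

variable {n : ℕ}

/-- The value at `a` of the monomial of `f` with exponent `j`. -/
noncomputable def mon (f : MvPolynomial (Fin n) T) (j : Fin n →₀ ℕ) (a : Fin n → T) : T :=
  eval a (monomial j (coeff j f))

/-- The point `a` with coordinate `k` shifted (multiplied) by `tang ε`. -/
noncomputable def shift (a : Fin n → T) (k : Fin n) (ε : ℝ) : Fin n → T :=
  Function.update a k (a k * tang ε)

lemma mon_shift (f : MvPolynomial (Fin n) T) (j : Fin n →₀ ℕ) (a : Fin n → T)
    (k : Fin n) (ε : ℝ) :
    mon f j (shift a k ε) = mon f j a * tang ((j k : ℝ) * ε) := by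
  unfold mon shift
  rw [eval_monomial, eval_monomial,
    Finsupp.prod_fintype _ _ (fun i => pow_zero _),
    Finsupp.prod_fintype _ _ (fun i => pow_zero _),
    ← Finset.mul_prod_erase Finset.univ _ (Finset.mem_univ k),
    ← Finset.mul_prod_erase Finset.univ (fun i => a i ^ j i) (Finset.mem_univ k)]
  have hupd : ∀ i ∈ Finset.univ.erase k,
      Function.update a k (a k * tang ε) i ^ j i = a i ^ j i := by
    intro i hi
    rw [Function.update_of_ne (Finset.mem_erase.1 hi).1]
  rw [Finset.prod_congr rfl hupd, Function.update_self, mul_pow, tang_pow]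
  ring

lemma gval_mon_shift (f : MvPolynomial (Fin n) T) (j : Fin n →₀ ℕ) (a : Fin n → T)
    (k : Fin n) (ε : ℝ) :
    gval (mon f j (shift a k ε)) = gval (mon f j a) * Real.exp ((j k : ℝ) * ε) := by
  rw [mon_shift, gval_mul, gval_tang]

open Classical in
/-- The set of exponents of `f` whose monomials have maximal value at `a`. -/
noncomputable def Jset (f : MvPolynomial (Fin n) T) (a : Fin n → T) : Finset (Fin n →₀ ℕ) :=
  f.support.filter (fun j => ∀ i ∈ f.support, gval (mon f i a) ≤ gval (mon f j a))

lemma Jset_subset (f : MvPolynomial (Fin n) T) (a : Fin n → T) : Jset f a ⊆ f.support := by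
  classical
  exact Finset.filter_subset _ _

lemma mem_Jset {f : MvPolynomial (Fin n) T} {a : Fin n → T} {j : Fin n →₀ ℕ} :
    j ∈ Jset f a ↔ j ∈ f.support ∧ ∀ i ∈ f.support, gval (mon f i a) ≤ gval (mon f j a) := by
  classical
  simp [Jset]

lemma gval_eq_on_Jset {f : MvPolynomial (Fin n) T} {a : Fin n → T} {j j' : Fin n →₀ ℕ}
    (hj : j ∈ Jset f a) (hj' : j' ∈ Jset f a) :
    gval (mon f j a) = gval (mon f j' a) := by
  rw [mem_Jset] at hj hj'
  exact le_antisymm (hj'.2 j hj.1) (hj.2 j' hj'.1)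

lemma lt_of_not_mem_Jset {f : MvPolynomial (Fin n) T} {a : Fin n → T} {j j0 : Fin n →₀ ℕ}
    (hj : j ∈ f.support) (hjn : j ∉ Jset f a) (hj0 : j0 ∈ Jset f a) :
    gval (mon f j a) < gval (mon f j0 a) := by
  rw [mem_Jset] at hj0
  have : ¬ ∀ i ∈ f.support, gval (mon f i a) ≤ gval (mon f j a) := by
    intro hc
    exact hjn (mem_Jset.2 ⟨hj, hc⟩)
  push_neg at this
  obtain ⟨i, hi, hlt⟩ := this
  exact lt_of_lt_of_le hlt (hj0.2 i hi)

lemma eval_removeMono (f : MvPolynomial (Fin n) T) (i : Fin n →₀ ℕ) (a : Fin n → T) :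
    eval a (removeMono i f) = ∑ j ∈ f.support.erase i, mon f j a := by
  rw [removeMono, map_sum]
  rfl

/-- A monomial that is strictly dominant somewhere is essential. -/
lemma essential_of_strict {f : MvPolynomial (Fin n) T} {j0 : Fin n →₀ ℕ} {a : Fin n → T}
    (hj0 : j0 ∈ f.support) (hpos : 0 < gval (mon f j0 a))
    (hstrict : ∀ j ∈ f.support, j ≠ j0 → gval (mon f j a) < gval (mon f j0 a)) :
    Essential f j0 := by
  classical
  refine ⟨hj0, fun hdom => ?_⟩
  have h := hdom a
  rw [eval_removeMono] at h
  have hrest : gval (∑ j ∈ f.support.erase j0, mon f j a) < gval (mon f j0 a) := by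
    refine gval_sum_lt hpos fun j hj => ?_
    exact hstrict j (Finset.mem_of_mem_erase hj) (Finset.mem_erase.1 hj).1
  have heq : (∑ j ∈ f.support.erase j0, mon f j a) + eval a (monomial j0 (coeff j0 f))
      = mon f j0 a := by
    rw [add_comm]
    exact add_eq_left hrest
  rw [heq] at h
  rw [h] at hrest
  exact lt_irrefl _ hrest

end TropAux
namespace TropAux

open T MvPolynomial

variable {n : ℕ}

open Classical in
/-- Shifting a point in a generic direction cuts the maximizer set down to the
argmax of a linear functional. -/
lemma shift_Jset {f : MvPolynomial (Fin n) T} {a : Fin n → T} (k : Fin n) (σ : ℝ)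
    {j0 : Fin n →₀ ℕ} (hj0 : j0 ∈ Jset f a) (hpos : 0 < gval (mon f j0 a)) :
    ∃ a' : Fin n → T,
      Jset f a' = (Jset f a).filter
        (fun j => ∀ i ∈ Jset f a, σ * (i k : ℝ) ≤ σ * (j k : ℝ)) ∧
      ∀ j ∈ Jset f a', 0 < gval (mon f j a') := by
  classical
  set V := gval (mon f j0 a) with hV
  set w : (Fin n →₀ ℕ) → ℝ := fun j => σ * (j k : ℝ) with hw
  obtain ⟨jm, hjm, hjmax⟩ := Finset.exists_max_image (Jset f a) w ⟨j0, hj0⟩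
  set Tσ : Finset (Fin n →₀ ℕ) :=
    (Jset f a).filter (fun j => ∀ i ∈ Jset f a, σ * (i k : ℝ) ≤ σ * (j k : ℝ)) with hTσ
  have hjmT : jm ∈ Tσ := Finset.mem_filter.2 ⟨hjm, hjmax⟩
  have hTsub : Tσ ⊆ Jset f a := Finset.filter_subset _ _
  set c : ℝ := w jm with hc
  have hwT : ∀ j ∈ Tσ, w j = c := by
    intro j hj
    have h1 := (Finset.mem_filter.1 hj).2
    exact le_antisymm (hjmax j (hTsub hj)) (h1 jm hjm)
  have hgvJ : ∀ j ∈ Jset f a, gval (mon f j a) = V := fun j hj => gval_eq_on_Jset hj hj0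
  have hev : ∀ᶠ ε in nhds (0 : ℝ), ∀ j ∈ f.support \ Jset f a,
      gval (mon f j a) * Real.exp (ε * w j) < V * Real.exp (ε * c) := by
    rw [Filter.eventually_all_finset]
    intro j hj
    have hj' := Finset.mem_sdiff.1 hj
    have hlt : gval (mon f j a) < V := lt_of_not_mem_Jset hj'.1 hj'.2 hj0
    have h0 : (fun ε : ℝ => gval (mon f j a) * Real.exp (ε * w j)) 0
        < (fun ε : ℝ => V * Real.exp (ε * c)) 0 := by simpa using hlt
    exact ContinuousAt.eventually_lt (by fun_prop) (by fun_prop) h0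
  obtain ⟨ε, hεcond, hεpos⟩ :=
    ((eventually_nhdsWithin_of_eventually_nhds (s := Set.Ioi (0:ℝ)) hev).and
      eventually_mem_nhdsWithin).exists
  rw [Set.mem_Ioi] at hεpos
  have hval : ∀ j, gval (mon f j (shift a k (ε * σ)))
      = gval (mon f j a) * Real.exp (ε * w j) := by
    intro j
    rw [gval_mon_shift]
    congr 2
    simp only [hw]
    ring
  have hvalT : ∀ j ∈ Tσ, gval (mon f j (shift a k (ε * σ))) = V * Real.exp (ε * c) := by
    intro j hj
    rw [hval, hgvJ j (hTsub hj), hwT j hj]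
  have hvalJ : ∀ j ∈ Jset f a, j ∉ Tσ →
      gval (mon f j (shift a k (ε * σ))) < V * Real.exp (ε * c) := by
    intro j hjJ hjT
    have : ¬ ∀ i ∈ Jset f a, σ * (i k : ℝ) ≤ σ * (j k : ℝ) := by
      intro hcon
      exact hjT (Finset.mem_filter.2 ⟨hjJ, hcon⟩)
    push_neg at this
    obtain ⟨i, hi, hlti⟩ := this
    have hwlt : w j < c := lt_of_lt_of_le hlti (hjmax i hi)
    rw [hval, hgvJ j hjJ]
    exact mul_lt_mul_of_pos_left
      (Real.exp_lt_exp.2 (by nlinarith : ε * w j < ε * c)) hpos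
  have hvalS : ∀ j ∈ f.support, j ∉ Jset f a →
      gval (mon f j (shift a k (ε * σ))) < V * Real.exp (ε * c) := by
    intro j hjS hjJ
    rw [hval]
    exact hεcond j (Finset.mem_sdiff.2 ⟨hjS, hjJ⟩)
  have hle : ∀ i ∈ f.support,
      gval (mon f i (shift a k (ε * σ))) ≤ V * Real.exp (ε * c) := by
    intro i hi
    by_cases hiT : i ∈ Tσ
    · exact le_of_eq (hvalT i hiT)
    · by_cases hiJ : i ∈ Jset f a
      · exact (hvalJ i hiJ hiT).le
      · exact (hvalS i hi hiJ).le
  have hJeq : Jset f (shift a k (ε * σ)) = Tσ := by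
    ext j
    constructor
    · intro hj
      rw [mem_Jset] at hj
      by_contra hjT
      have hjm' : gval (mon f jm (shift a k (ε * σ))) = V * Real.exp (ε * c) := hvalT jm hjmT
      have hlt : gval (mon f j (shift a k (ε * σ))) < V * Real.exp (ε * c) := by
        by_cases hjJ : j ∈ Jset f a
        · exact hvalJ j hjJ hjT
        · exact hvalS j hj.1 hjJ
      have h2 := hj.2 jm (Jset_subset f a hjm)
      rw [hjm'] at h2
      exact absurd (lt_of_le_of_lt h2 hlt) (lt_irrefl _)
    · intro hj
      rw [mem_Jset]
      refine ⟨Jset_subset f a (hTsub hj), fun i hi => ?_⟩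
      rw [hvalT j hj]
      exact hle i hi
  refine ⟨shift a k (ε * σ), hJeq, fun j hj => ?_⟩
  rw [hJeq] at hj
  rw [hvalT j hj]
  exact mul_pos hpos (Real.exp_pos _)

end TropAux
namespace TropAux

open T MvPolynomial

variable {n : ℕ}

lemma exists_essential {f : MvPolynomial (Fin n) T} (m : ℕ) :
    ∀ (a : Fin n → T), (Jset f a).card ≤ m →
    ∀ j0 ∈ Jset f a, 0 < gval (mon f j0 a) → ∃ j ∈ Jset f a, Essential f j := by
  classical
  induction m with
  | zero =>
    intro a hcard j0 hj0 _
    exact absurd (Finset.card_pos.2 ⟨j0, hj0⟩) (by omega)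
  | succ m ih =>
    intro a hcard j0 hj0 hpos
    by_cases hone : ∀ j ∈ Jset f a, j = j0
    · refine ⟨j0, hj0, essential_of_strict (Jset_subset f a hj0) hpos ?_⟩
      intro j hjS hne
      refine lt_of_not_mem_Jset hjS (fun hc => hne (hone j hc)) hj0
    · push_neg at hone
      obtain ⟨j1, hj1, hne⟩ := hone
      obtain ⟨k, hk⟩ : ∃ k, j1 k ≠ j0 k := by
        by_contra hc
        push_neg at hc
        exact hne (Finsupp.ext hc)
      obtain ⟨a', hJ', hpos'⟩ := shift_Jset k 1 hj0 hpos
      obtain ⟨jm, hjm, hjmax⟩ := Finset.exists_max_image (Jset f a)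
        (fun j => (1:ℝ) * (j k : ℝ)) ⟨j0, hj0⟩
      have hjmT : jm ∈ Jset f a' := by
        rw [hJ']
        exact Finset.mem_filter.2 ⟨hjm, hjmax⟩
      have hsub : Jset f a' ⊆ Jset f a := by
        rw [hJ']; exact Finset.filter_subset _ _
      have hss : Jset f a' ⊂ Jset f a := by
        refine Finset.ssubset_iff_of_subset hsub |>.2 ?_
        rcases lt_or_gt_of_ne hk with h | h
        · refine ⟨j1, hj1, fun hc => ?_⟩
          rw [hJ'] at hc
          have := (Finset.mem_filter.1 hc).2 j0 hj0
          simp only [one_mul] at this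
          exact absurd (Nat.cast_lt.2 h) (not_lt.2 this)
        · refine ⟨j0, hj0, fun hc => ?_⟩
          rw [hJ'] at hc
          have := (Finset.mem_filter.1 hc).2 j1 hj1
          simp only [one_mul] at this
          exact absurd (Nat.cast_lt.2 h) (not_lt.2 this)
      have hcard' : (Jset f a').card ≤ m := by
        have := Finset.card_lt_card hss
        omega
      obtain ⟨j, hjmem, hjess⟩ := ih a' hcard' jm hjmT (hpos' jm hjmT)
      exact ⟨j, hsub hjmem, hjess⟩

lemma exists_two_essential {f : MvPolynomial (Fin n) T} {a : Fin n → T}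
    {j0 j1 : Fin n →₀ ℕ} (hj0 : j0 ∈ Jset f a) (hj1 : j1 ∈ Jset f a) (hne : j0 ≠ j1)
    (hpos : 0 < gval (mon f j0 a)) :
    ∃ e0 ∈ Jset f a, ∃ e1 ∈ Jset f a, e0 ≠ e1 ∧ Essential f e0 ∧ Essential f e1 := by
  classical
  obtain ⟨k, hk⟩ : ∃ k, j0 k ≠ j1 k := by
    by_contra hc
    push_neg at hc
    exact hne (Finsupp.ext hc)
  obtain ⟨ap, hJp, hposp⟩ := shift_Jset k 1 hj0 hpos
  obtain ⟨am, hJm, hposm⟩ := shift_Jset k (-1) hj0 hpos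
  obtain ⟨jp, hjp, hjpmax⟩ := Finset.exists_max_image (Jset f a)
    (fun j => (1:ℝ) * (j k : ℝ)) ⟨j0, hj0⟩
  obtain ⟨jq, hjq, hjqmax⟩ := Finset.exists_max_image (Jset f a)
    (fun j => (-1:ℝ) * (j k : ℝ)) ⟨j0, hj0⟩
  have hjpT : jp ∈ Jset f ap := by
    rw [hJp]; exact Finset.mem_filter.2 ⟨hjp, hjpmax⟩
  have hjqT : jq ∈ Jset f am := by
    rw [hJm]; exact Finset.mem_filter.2 ⟨hjq, hjqmax⟩
  have hsubp : Jset f ap ⊆ Jset f a := by rw [hJp]; exact Finset.filter_subset _ _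
  have hsubm : Jset f am ⊆ Jset f a := by rw [hJm]; exact Finset.filter_subset _ _
  obtain ⟨e0, he0, he0ess⟩ := exists_essential (Jset f ap).card ap le_rfl jp hjpT (hposp jp hjpT)
  obtain ⟨e1, he1, he1ess⟩ := exists_essential (Jset f am).card am le_rfl jq hjqT (hposm jq hjqT)
  refine ⟨e0, hsubp he0, e1, hsubm he1, fun hc => ?_, he0ess, he1ess⟩
  subst hc
  rw [hJp] at he0
  rw [hJm] at he1
  have h0 := (Finset.mem_filter.1 he0).2 j0 hj0
  have h1 := (Finset.mem_filter.1 he0).2 j1 hj1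
  have h0' := (Finset.mem_filter.1 he1).2 j0 hj0
  have h1' := (Finset.mem_filter.1 he1).2 j1 hj1
  simp only [one_mul, neg_mul, neg_le_neg_iff] at h0 h1 h0' h1'
  have : (j0 k : ℝ) = (j1 k : ℝ) := by linarith
  exact hk (Nat.cast_injective this)

end TropAux
open TropAux MvPolynomial T in
/-- every polynomial is equivalent to its essential part. -/
theorem tropical_equiv_essentialPart (n : ℕ) (f : MvPolynomial (Fin n) T) :
    ∀ a : Fin n → T, MvPolynomial.eval a f = MvPolynomial.eval a (T.essentialPart f) := by
  classical
  intro a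
  have hf : eval a f = ∑ j ∈ f.support, mon f j a := by
    conv_lhs => rw [← MvPolynomial.support_sum_monomial_coeff f]
    rw [map_sum]
    rfl
  have he : eval a (T.essentialPart f)
      = ∑ j ∈ f.support.filter (fun j => T.Essential f j), mon f j a := by
    rw [T.essentialPart, map_sum]
    have hcongr : ∀ j ∈ f.support,
        eval a (if T.Essential f j then monomial j (coeff j f) else 0)
          = if T.Essential f j then mon f j a else 0 := by
      intro j _
      split_ifs <;> simp [mon]
    rw [Finset.sum_congr rfl hcongr, ← Finset.sum_filter]
  rw [hf, he]
  by_cases hz : ∀ j ∈ f.support, mon f j a = 0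
  · rw [Finset.sum_eq_zero hz,
      Finset.sum_eq_zero (fun j hj => hz j (Finset.filter_subset _ _ hj))]
  · push_neg at hz
    obtain ⟨j1, hj1S, hj1z⟩ := hz
    obtain ⟨j0, hj0S, hj0max⟩ := Finset.exists_max_image f.support
      (fun j => gval (mon f j a)) ⟨j1, hj1S⟩
    have hj0J : j0 ∈ Jset f a := mem_Jset.2 ⟨hj0S, hj0max⟩
    have hpos : 0 < gval (mon f j0 a) :=
      lt_of_lt_of_le (gval_pos hj1z) (hj0max j1 hj1S)
    obtain ⟨jE, hjEJ, hjEess⟩ := exists_essential (Jset f a).card a le_rfl j0 hj0J hpos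
    set K := (Jset f a).filter (fun j => T.Essential f j) with hK
    have hjEK : jE ∈ K := Finset.mem_filter.2 ⟨hjEJ, hjEess⟩
    have hgvJ : ∀ j ∈ Jset f a, gval (mon f j a) = gval (mon f j0 a) :=
      fun j hj => gval_eq_on_Jset hj hj0J
    have hKsub : K ⊆ Jset f a := Finset.filter_subset _ _
    have hKE : K ⊆ f.support.filter (fun j => T.Essential f j) := by
      intro j hj
      have hj' := Finset.mem_filter.1 hj
      exact Finset.mem_filter.2 ⟨Jset_subset f a hj'.1, hj'.2⟩
    have hsumJ : gval (∑ j ∈ Jset f a, mon f j a) = gval (mon f j0 a) :=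
      le_antisymm (gval_sum_le hpos.le fun j hj => (hgvJ j hj).le) (le_gval_sum (g := fun j => mon f j a) hj0J)
    have hsumK : gval (∑ j ∈ K, mon f j a) = gval (mon f j0 a) := by
      refine le_antisymm (gval_sum_le hpos.le fun j hj => (hgvJ j (hKsub hj)).le) ?_
      calc gval (mon f j0 a) = gval (mon f jE a) := (hgvJ jE hjEJ).symm
      _ ≤ _ := le_gval_sum (g := fun j => mon f j a) hjEK
    have h1 : ∑ j ∈ f.support, mon f j a = ∑ j ∈ Jset f a, mon f j a := by
      refine sum_subset_eq (Jset_subset f a) fun j hjS hjJ => ?_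
      rw [hsumJ]
      exact lt_of_not_mem_Jset hjS hjJ hj0J
    have h2 : ∑ j ∈ f.support.filter (fun j => T.Essential f j), mon f j a
        = ∑ j ∈ K, mon f j a := by
      refine sum_subset_eq hKE fun j hjE hjK => ?_
      rw [hsumK]
      have hjS := (Finset.mem_filter.1 hjE).1
      have hjJ : j ∉ Jset f a := fun hc =>
        hjK (Finset.mem_filter.2 ⟨hc, (Finset.mem_filter.1 hjE).2⟩)
      exact lt_of_not_mem_Jset hjS hjJ hj0J
    rw [h1, h2]
    by_cases hJK : Jset f a ⊆ K
    · rw [Finset.Subset.antisymm hJK hKsub]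
    · obtain ⟨j2, hj2J, hj2K⟩ := Finset.not_subset.1 hJK
      have hj2ne : j2 ≠ jE := fun hc => hj2K (hc ▸ hjEK)
      have hpos2 : 0 < gval (mon f j2 a) := by rw [hgvJ j2 hj2J]; exact hpos
      obtain ⟨e0, he0, e1, he1, hene, he0ess, he1ess⟩ :=
        exists_two_essential hj2J hjEJ hj2ne hpos2
      have he0K : e0 ∈ K := Finset.mem_filter.2 ⟨he0, he0ess⟩
      have he1K : e1 ∈ K := Finset.mem_filter.2 ⟨he1, he1ess⟩
      rw [sum_ghost hpos hgvJ hj2J hjEJ hj2ne,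
        sum_ghost hpos (fun j hj => hgvJ j (hKsub hj)) he0K he1K hene]
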